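/- Suppose G(λ) < ∞. Then the probability that the system is empty satisfies ψ = (M(K) − Λ(I)) / (∑_{k∈K} μ_k / ψ_{|−k}); equivalently, ∑_{k∈K} μ_k · G(λ_{|−k}) = (M(K) − Λ(I)) · G(λ). (Note G(λ_{|−k}) ≤ G(λ) < ∞, so all quantities are well defined.) -/

import Mathlib

open scoped BigOperators

/-- The balance function of balanced fairness: `Φ(0) = 1` and
`Φ(x) = (∑_{i : x_i > 0} Φ(x - e_i)) / M(⋃_{i : x_i > 0} 𝒦_i)`. -/
noncomputable def Phi {I K : Type} [Fintype I] [DecidableEq I] [DecidableEq K]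
    (μ : K → ℝ) (Ka : I → Finset K) (x : I → ℕ) : ℝ :=
  if x = fun _ => 0 then 1
  else (∑ i ∈ (Finset.univ.filter (fun i => 0 < x i)).attach,
      Phi μ Ka (Function.update x i.1 (x i.1 - 1))) /
    (∑ k ∈ (Finset.univ.filter (fun i => 0 < x i)).biUnion Ka, μ k)
termination_by ∑ i, x i
decreasing_by
  have hi := i.2
  simp only [Finset.mem_filter] at hi
  apply Finset.sum_lt_sum
  · intro j _
    rcases eq_or_ne j i.1 with rfl | h
    · simp [Function.update_self]
    · rw [Function.update_of_ne h]
  · exact ⟨i.1, Finset.mem_univ i.1, by simp [Function.update_self]; omega⟩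

/-- Arrival rates of the system with all traffic of classes assigned to server `k` removed. -/
def lamMinus {I K : Type} [DecidableEq K] (Ka : I → Finset K) (lam : I → ℝ) (k : K) :
    I → ℝ :=
  fun i => if k ∈ Ka i then 0 else lam i

section Aux
variable {I K : Type} [Fintype I] [DecidableEq I] [DecidableEq K]

lemma Phi_nonneg (μ : K → ℝ) (hμ : ∀ k, 0 ≤ μ k) (Ka : I → Finset K) (x : I → ℕ) :
    0 ≤ Phi μ Ka x := by
  rw [Phi]
  split
  · norm_num
  · refine div_nonneg (Finset.sum_nonneg fun i _ => ?_) (Finset.sum_nonneg fun k _ => hμ k)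
    exact Phi_nonneg μ hμ Ka _
termination_by ∑ i, x i
decreasing_by
  have hi := i.2
  simp only [Finset.mem_filter] at hi
  apply Finset.sum_lt_sum
  · intro j _
    rcases eq_or_ne j i.1 with rfl | h
    · simp [Function.update_self]
    · rw [Function.update_of_ne h]
  · exact ⟨i.1, Finset.mem_univ i.1, by simp [Function.update_self]; omega⟩

omit [DecidableEq I] in
lemma den_pos (μ : K → ℝ) (hμ : ∀ k, 0 < μ k) (Ka : I → Finset K)
    (hKa : ∀ i, (Ka i).Nonempty) {x : I → ℕ} (hx : x ≠ fun _ => 0) :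
    0 < ∑ k ∈ (Finset.univ.filter (fun i => 0 < x i)).biUnion Ka, μ k := by
  obtain ⟨i, hi⟩ : ∃ i, 0 < x i := by
    by_contra h; push_neg at h
    exact hx (funext fun i => by have := h i; omega)
  obtain ⟨k, hk⟩ := hKa i
  exact Finset.sum_pos (fun k _ => hμ k)
    ⟨k, Finset.mem_biUnion.2 ⟨i, Finset.mem_filter.2 ⟨Finset.mem_univ i, hi⟩, hk⟩⟩

lemma Phi_mul_den (μ : K → ℝ) (hμ : ∀ k, 0 < μ k) (Ka : I → Finset K)
    (hKa : ∀ i, (Ka i).Nonempty) {x : I → ℕ} (hx : x ≠ fun _ => 0) :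
    Phi μ Ka x * ∑ k ∈ (Finset.univ.filter (fun i => 0 < x i)).biUnion Ka, μ k =
      ∑ i ∈ Finset.univ.filter (fun i => 0 < x i),
        Phi μ Ka (Function.update x i (x i - 1)) := by
  rw [Phi, if_neg hx, div_mul_cancel₀ _ (den_pos μ hμ Ka hKa hx).ne']
  exact Finset.sum_attach _ (fun i => Phi μ Ka (Function.update x i (x i - 1)))

end Aux

section Aux2
variable {I K : Type} [Fintype I] [DecidableEq I] [DecidableEq K]

omit [DecidableEq I] in
lemma prod_lamMinus (Ka : I → Finset K) (lam : I → ℝ) (hlam : ∀ i, 0 ≤ lam i)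
    (k : K) (x : I → ℕ) :
    ∏ i, lamMinus Ka lam k i ^ x i =
      if k ∈ (Finset.univ.filter (fun i => 0 < x i)).biUnion Ka then 0
      else ∏ i, lam i ^ x i := by
  split
  case isTrue h =>
    obtain ⟨i, hi, hk⟩ := Finset.mem_biUnion.1 h
    rw [Finset.mem_filter] at hi
    apply Finset.prod_eq_zero (Finset.mem_univ i)
    simp only [lamMinus, if_pos hk]
    exact zero_pow (by omega)
  case isFalse h =>
    apply Finset.prod_congr rfl
    intro i _
    by_cases hk : k ∈ Ka i
    · have hxi : x i = 0 := by
        by_contra hx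
        exact h (Finset.mem_biUnion.2
          ⟨i, Finset.mem_filter.2 ⟨Finset.mem_univ i, by omega⟩, hk⟩)
      simp [hxi]
    · simp only [lamMinus, if_neg hk]

omit [Fintype I] [DecidableEq K] in
lemma shift_inj (i : I) :
    Function.Injective (fun y : I → ℕ => Function.update y i (y i + 1)) := by
  intro y z h
  funext j
  rcases eq_or_ne j i with rfl | hne
  · have := congrFun h j
    simpa using this
  · have := congrFun h j
    simp only [Function.update_of_ne hne] at this
    exact this

omit [Fintype I] [DecidableEq K] in
lemma shift_range {i : I} {x : I → ℕ} (hx : 0 < x i) :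
    x ∈ Set.range (fun y : I → ℕ => Function.update y i (y i + 1)) := by
  refine ⟨Function.update x i (x i - 1), ?_⟩
  simp only [Function.update_self, Function.update_idem]
  rw [show x i - 1 + 1 = x i by omega, Function.update_eq_self]

omit [DecidableEq K] in
lemma prod_pow_update_succ (lam : I → ℝ) (y : I → ℕ) (i : I) :
    ∏ j, lam j ^ (Function.update y i (y i + 1) j) = lam i * ∏ j, lam j ^ y j := by
  rw [← Finset.mul_prod_erase Finset.univ _ (Finset.mem_univ i),
      ← Finset.mul_prod_erase Finset.univ (fun j => lam j ^ y j) (Finset.mem_univ i),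
      Finset.prod_congr rfl
        (fun j hj => by rw [Function.update_of_ne (Finset.ne_of_mem_erase hj)]),
      Function.update_self, pow_succ]
  ring

end Aux2

/-- **Theorem 1 of the paper.** If `G(λ) < ∞` then
`ψ = (M(K) − Λ(I)) / (∑_k μ_k / ψ_{|−k})`; equivalently
`∑_k μ_k G(λ_{|−k}) = (M(K) − Λ(I)) G(λ)` — and each `G(λ_{|−k})` is finite. -/
theorem empty_probability_recursion
    {I K : Type} [Fintype I] [DecidableEq I] [Nonempty I]
    [Fintype K] [DecidableEq K] [Nonempty K]
    (μ : K → ℝ) (hμ : ∀ k, 0 < μ k)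
    (Ka : I → Finset K) (hKa : ∀ i, (Ka i).Nonempty) (hcov : ∀ k, ∃ i, k ∈ Ka i)
    (lam : I → ℝ) (hlam : ∀ i, 0 ≤ lam i)
    (hG : Summable (fun x : I → ℕ => Phi μ Ka x * ∏ i, lam i ^ x i)) :
    (∀ k : K, Summable (fun x : I → ℕ => Phi μ Ka x * ∏ i, lamMinus Ka lam k i ^ x i)) ∧
    (∑ k, μ k * ∑' x : I → ℕ, Phi μ Ka x * ∏ i, lamMinus Ka lam k i ^ x i) =
      ((∑ k, μ k) - ∑ i, lam i) * ∑' x : I → ℕ, Phi μ Ka x * ∏ i, lam i ^ x i ∧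
    (∑' x : I → ℕ, Phi μ Ka x * ∏ i, lam i ^ x i)⁻¹ =
      ((∑ k, μ k) - ∑ i, lam i) /
        ∑ k, μ k / (∑' x : I → ℕ, Phi μ Ka x * ∏ i, lamMinus Ka lam k i ^ x i)⁻¹ := by
  classical
  have hμ0 : ∀ k, 0 ≤ μ k := fun k => (hμ k).le
  have hΦ : ∀ x : I → ℕ, 0 ≤ Phi μ Ka x := Phi_nonneg μ hμ0 Ka
  have hprod : ∀ x : I → ℕ, 0 ≤ ∏ i, lam i ^ x i :=
    fun x => Finset.prod_nonneg fun i _ => pow_nonneg (hlam i) _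
  -- Part 1: summability of each G(λ_{|-k})
  have h1 : ∀ k : K,
      Summable (fun x : I → ℕ => Phi μ Ka x * ∏ i, lamMinus Ka lam k i ^ x i) := by
    intro k
    refine Summable.of_nonneg_of_le (fun x => ?_) (fun x => ?_) hG
    · rw [prod_lamMinus Ka lam hlam k x]
      split
      · simp
      · exact mul_nonneg (hΦ x) (hprod x)
    · rw [prod_lamMinus Ka lam hlam k x]
      split
      · simpa using mul_nonneg (hΦ x) (hprod x)
      · exact le_rfl
  refine ⟨h1, ?_⟩
  -- notation
  set G : ℝ := ∑' x : I → ℕ, Phi μ Ka x * ∏ i, lam i ^ x i with hGdef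
  set Gm : K → ℝ := fun k => ∑' x : I → ℕ, Phi μ Ka x * ∏ i, lamMinus Ka lam k i ^ x i
    with hGmdef
  set S : (I → ℕ) → Finset K :=
    fun x => (Finset.univ.filter (fun i => 0 < x i)).biUnion Ka with hSdef
  -- the per-class shifted summands
  set g : I → (I → ℕ) → ℝ := fun i x =>
    if 0 < x i then Phi μ Ka (Function.update x i (x i - 1)) * ∏ j, lam j ^ x j else 0
    with hgdef
  have hgcomp : ∀ i : I, ∀ y : I → ℕ,
      g i (Function.update y i (y i + 1)) = lam i * (Phi μ Ka y * ∏ j, lam j ^ y j) := by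
    intro i y
    have h0 : 0 < Function.update y i (y i + 1) i := by simp
    simp only [hgdef, if_pos h0, Function.update_self, Nat.add_sub_cancel,
      Function.update_idem, Function.update_eq_self]
    rw [prod_pow_update_succ]
    ring
  have hgzero : ∀ i : I, ∀ x : I → ℕ,
      x ∉ Set.range (fun y : I → ℕ => Function.update y i (y i + 1)) → g i x = 0 := by
    intro i x hx
    rw [hgdef]
    simp only
    rw [if_neg]
    intro h0
    exact hx (shift_range h0)
  have hgsummable : ∀ i : I, Summable (g i) := by
    intro i
    refine ((shift_inj i).summable_iff (hgzero i)).1 ?_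
    have : (g i) ∘ (fun y : I → ℕ => Function.update y i (y i + 1)) =
        fun y => lam i * (Phi μ Ka y * ∏ j, lam j ^ y j) := funext fun y => hgcomp i y
    rw [this]
    exact hG.mul_left _
  have hgtsum : ∀ i : I, ∑' x : I → ℕ, g i x = lam i * G := by
    intro i
    have hsupp : Function.support (g i) ⊆
        Set.range (fun y : I → ℕ => Function.update y i (y i + 1)) := by
      intro x hx
      by_contra hc
      exact hx (hgzero i x hc)
    rw [← (shift_inj i).tsum_eq hsupp]
    calc ∑' y : I → ℕ, g i (Function.update y i (y i + 1))
        = ∑' y : I → ℕ, lam i * (Phi μ Ka y * ∏ j, lam j ^ y j) :=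
          tsum_congr fun y => hgcomp i y
      _ = lam i * G := tsum_mul_left
  -- A : internal activity term
  have hA : ∀ x : I → ℕ,
      (Phi μ Ka x * ∏ i, lam i ^ x i) * (∑ k ∈ S x, μ k) = ∑ i, g i x := by
    intro x
    rcases eq_or_ne x (fun _ => 0) with rfl | hx
    · have hfilter : (Finset.univ.filter (fun i => 0 < (fun _ : I => 0) i)) = ∅ := by
        simp
      have hS0 : S (fun _ => 0) = ∅ := by rw [hSdef]; simp [hfilter]
      rw [hS0]
      simp [hgdef]
    · have hrec := Phi_mul_den μ hμ Ka hKa hx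
      calc (Phi μ Ka x * ∏ i, lam i ^ x i) * (∑ k ∈ S x, μ k)
          = (Phi μ Ka x * ∑ k ∈ S x, μ k) * ∏ i, lam i ^ x i := by ring
        _ = (∑ i ∈ Finset.univ.filter (fun i => 0 < x i),
              Phi μ Ka (Function.update x i (x i - 1))) * ∏ i, lam i ^ x i := by
              rw [hSdef, hrec]
        _ = ∑ i ∈ Finset.univ.filter (fun i => 0 < x i),
              Phi μ Ka (Function.update x i (x i - 1)) * ∏ j, lam j ^ x j := by
              rw [Finset.sum_mul]
        _ = ∑ i, g i x := by
              rw [hgdef, Finset.sum_filter]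
  have hAsummable : Summable (fun x : I → ℕ =>
      (Phi μ Ka x * ∏ i, lam i ^ x i) * (∑ k ∈ S x, μ k)) := by
    have : (fun x : I → ℕ => (Phi μ Ka x * ∏ i, lam i ^ x i) * (∑ k ∈ S x, μ k)) =
        fun x => ∑ i, g i x := funext hA
    rw [this]
    exact summable_sum fun i _ => hgsummable i
  have hAtsum : ∑' x : I → ℕ, (Phi μ Ka x * ∏ i, lam i ^ x i) * (∑ k ∈ S x, μ k) =
      (∑ i, lam i) * G := by
    calc ∑' x : I → ℕ, (Phi μ Ka x * ∏ i, lam i ^ x i) * (∑ k ∈ S x, μ k)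
        = ∑' x : I → ℕ, ∑ i, g i x := tsum_congr hA
      _ = ∑ i, ∑' x : I → ℕ, g i x := Summable.tsum_finsetSum fun i _ => hgsummable i
      _ = ∑ i, lam i * G := Finset.sum_congr rfl fun i _ => hgtsum i
      _ = (∑ i, lam i) * G := by rw [Finset.sum_mul]
  -- B : external (idle-server) term
  have hB : ∀ x : I → ℕ,
      (Phi μ Ka x * ∏ i, lam i ^ x i) * (∑ k ∈ (S x)ᶜ, μ k) =
        ∑ k, μ k * (Phi μ Ka x * ∏ i, lamMinus Ka lam k i ^ x i) := by
    intro x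
    have : ∀ k : K, μ k * (Phi μ Ka x * ∏ i, lamMinus Ka lam k i ^ x i) =
        if k ∈ (S x)ᶜ then μ k * (Phi μ Ka x * ∏ i, lam i ^ x i) else 0 := by
      intro k
      rw [prod_lamMinus Ka lam hlam k x]
      by_cases hk : k ∈ S x
      · rw [if_pos hk, if_neg (fun h => Finset.mem_compl.mp h hk)]
        ring
      · rw [if_neg hk, if_pos (Finset.mem_compl.mpr hk)]
    rw [Finset.sum_congr rfl fun k _ => this k, Finset.sum_ite_mem, Finset.univ_inter,
      ← Finset.sum_mul]
    ring
  have hBsummable : Summable (fun x : I → ℕ =>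
      (Phi μ Ka x * ∏ i, lam i ^ x i) * (∑ k ∈ (S x)ᶜ, μ k)) := by
    have : (fun x : I → ℕ => (Phi μ Ka x * ∏ i, lam i ^ x i) * (∑ k ∈ (S x)ᶜ, μ k)) =
        fun x => ∑ k, μ k * (Phi μ Ka x * ∏ i, lamMinus Ka lam k i ^ x i) :=
      funext hB
    rw [this]
    exact summable_sum fun k _ => (h1 k).mul_left _
  have hBtsum : ∑' x : I → ℕ, (Phi μ Ka x * ∏ i, lam i ^ x i) * (∑ k ∈ (S x)ᶜ, μ k) =
      ∑ k, μ k * Gm k := by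
    calc ∑' x : I → ℕ, (Phi μ Ka x * ∏ i, lam i ^ x i) * (∑ k ∈ (S x)ᶜ, μ k)
        = ∑' x : I → ℕ, ∑ k, μ k * (Phi μ Ka x * ∏ i, lamMinus Ka lam k i ^ x i) :=
          tsum_congr hB
      _ = ∑ k, ∑' x : I → ℕ, μ k * (Phi μ Ka x * ∏ i, lamMinus Ka lam k i ^ x i) :=
          Summable.tsum_finsetSum fun k _ => (h1 k).mul_left _
      _ = ∑ k, μ k * Gm k := Finset.sum_congr rfl fun k _ => tsum_mul_left
  -- combine
  have hABtsum : (∑ i, lam i) * G + ∑ k, μ k * Gm k = (∑ k, μ k) * G := by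
    rw [← hAtsum, ← hBtsum, ← Summable.tsum_add hAsummable hBsummable]
    calc ∑' x : I → ℕ, ((Phi μ Ka x * ∏ i, lam i ^ x i) * (∑ k ∈ S x, μ k) +
            (Phi μ Ka x * ∏ i, lam i ^ x i) * (∑ k ∈ (S x)ᶜ, μ k))
        = ∑' x : I → ℕ, (∑ k, μ k) * (Phi μ Ka x * ∏ i, lam i ^ x i) := by
          apply tsum_congr
          intro x
          rw [← mul_add, Finset.sum_add_sum_compl (S x) μ]
          ring
      _ = (∑ k, μ k) * G := tsum_mul_left
  have hmain : ∑ k, μ k * Gm k = ((∑ k, μ k) - ∑ i, lam i) * G := by linarith [hABtsum]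
  refine ⟨hmain, ?_⟩
  -- Part 3
  have hPhi0 : Phi μ Ka (fun _ : I => 0) = 1 := by rw [Phi]; simp
  have hGone : (1 : ℝ) ≤ G := by
    have := hG.le_tsum (fun _ => 0) (fun y _ => mul_nonneg (hΦ y) (hprod y))
    simpa [hPhi0] using this
  have hGmone : ∀ k, (1 : ℝ) ≤ Gm k := by
    intro k
    have := (h1 k).le_tsum (fun _ => 0) (fun y _ => by
      rw [prod_lamMinus Ka lam hlam k y]
      split
      · simp
      · exact mul_nonneg (hΦ y) (hprod y))
    simpa [hPhi0] using this
  have hGpos : (0 : ℝ) < G := lt_of_lt_of_le one_pos hGone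
  have hsumpos : (0 : ℝ) < ∑ k, μ k * Gm k :=
    Finset.sum_pos (fun k _ => mul_pos (hμ k) (lt_of_lt_of_le one_pos (hGmone k)))
      Finset.univ_nonempty
  have hM : (0 : ℝ) < (∑ k, μ k) - ∑ i, lam i := by
    by_contra hc
    push_neg at hc
    have h2 : ((∑ k, μ k) - ∑ i, lam i) * G ≤ 0 := mul_nonpos_of_nonpos_of_nonneg hc hGpos.le
    linarith
  have hden : ∀ k : K, μ k / (Gm k)⁻¹ = μ k * Gm k := by
    intro k
    rw [div_eq_mul_inv, inv_inv]
  rw [Finset.sum_congr rfl fun k _ => hden k, hmain]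
  rw [eq_div_iff (mul_pos hM hGpos).ne']
  rw [mul_comm ((∑ k, μ k) - ∑ i, lam i) G, ← mul_assoc, inv_mul_cancel₀ hGpos.ne', one_mul]
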